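/- e-closure k-FWER control: let e_S (S ⊆ [m]) be nonnegative random variables with E[e_{H0}] ≤ 1 for the true-null set H0. If a random rejection set R satisfies pointwise e_S ≥ 1{|S ∩ R| ≥ k}/α for all S ⊆ [m], then P(|H0 ∩ R| ≥ k) ≤ α. -/

import Mathlib

open MeasureTheory Finset

/-- e-closure k-FWER control: if E[e_{H0}] ≤ 1 and pointwise
e_S ≥ 1{|S ∩ R| ≥ k}/α for all S, then P(|H0 ∩ R| ≥ k) ≤ α. -/
theorem stmt14 {Ω : Type*} [MeasurableSpace Ω] (μ : Measure Ω) [IsProbabilityMeasure μ]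
    (m k : ℕ) (H0 : Finset (Fin m)) (e : Finset (Fin m) → Ω → ℝ)
    (R : Ω → Finset (Fin m)) (α : ℝ) (hα : 0 < α) (hα1 : α ≤ 1)
    (hnonneg : ∀ S ω, 0 ≤ e S ω)
    (hint : Integrable (e H0) μ)
    (hE : ∫ ω, e H0 ω ∂μ ≤ 1)
    (hmeas : MeasurableSet {ω | k ≤ (H0 ∩ R ω).card})
    (hcond : ∀ ω, ∀ S : Finset (Fin m),
      (if k ≤ (S ∩ R ω).card then (1:ℝ) else 0)/α ≤ e S ω) :
    μ {ω | k ≤ (H0 ∩ R ω).card} ≤ ENNReal.ofReal α := by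
  set A := {ω | k ≤ (H0 ∩ R ω).card} with hA
  have hfin : μ A ≠ ⊤ := measure_ne_top μ A
  rw [ENNReal.le_ofReal_iff_toReal_le hfin hα.le]
  have h1 : (μ A).toReal = ∫ ω, A.indicator (fun _ => (1:ℝ)) ω ∂μ := by
    rw [integral_indicator_const _ hmeas]
    simp
    rfl
  rw [h1]
  have hmono : ∀ ω, A.indicator (fun _ => (1:ℝ)) ω ≤ α * e H0 ω := by
    intro ω
    by_cases hω : ω ∈ A
    · have := hcond ω H0
      rw [if_pos (show k ≤ (H0 ∩ R ω).card from hω)] at this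
      rw [Set.indicator_of_mem hω]
      calc (1:ℝ) = α * (1/α) := by field_simp
      _ ≤ α * e H0 ω := by
        apply mul_le_mul_of_nonneg_left this hα.le
    · rw [Set.indicator_of_notMem hω]
      exact mul_nonneg hα.le (hnonneg _ _)
  calc ∫ ω, A.indicator (fun _ => (1:ℝ)) ω ∂μ
      ≤ ∫ ω, α * e H0 ω ∂μ := by
        apply integral_mono _ (hint.const_mul α) hmono
        exact (integrable_const (1:ℝ)).indicator hmeas
    _ = α * ∫ ω, e H0 ω ∂μ := integral_const_mul α _
    _ ≤ α * 1 := mul_le_mul_of_nonneg_left hE hα.le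
    _ = α := mul_one α
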